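/- In the complex reflection group G(m,m,n) with m ≥ 3 and n ≥ 3, the element g = diag(ζ, ζ^{−2}, ζ, 1, …, 1), where ζ = e^{2πi/m}, has codim(g) = 3 and reflection length ℓ(g) = 4. -/

import Mathlib

open Module Matrix

noncomputable section

/-- The primitive m-th root of unity e^{2πi/m}. -/
def zeta (m : ℕ) : ℂ := Complex.exp (2 * Real.pi * Complex.I / m)

/-- codim of a matrix: n minus the dimension of its fixed space. -/
def codimM {n : ℕ} (M : Matrix (Fin n) (Fin n) ℂ) : ℕ :=
  n - finrank ℂ (LinearMap.ker (M.mulVecLin - LinearMap.id))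

/-- Membership in the monomial reflection group G(m,p,n): a monomial matrix with
entries m-th roots of unity whose nonzero entries multiply to an (m/p)-th root of unity. -/
def InG (m p n : ℕ) (M : Matrix (Fin n) (Fin n) ℂ) : Prop :=
  ∃ (σ : Equiv.Perm (Fin n)) (d : Fin n → ℂ),
    (∀ j, d j ^ m = 1) ∧ ((∏ j, d j) ^ (m / p) = 1) ∧
    ∀ i j, M i j = if i = σ j then d j else 0

/-- A reflection of G(m,p,n): a nonidentity element of the group fixing a hyperplane
pointwise (i.e. of codimension one). -/
def IsReflM (m p n : ℕ) (M : Matrix (Fin n) (Fin n) ℂ) : Prop :=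
  InG m p n M ∧ M ≠ 1 ∧ codimM M = 1

/-- Reflection length in G(m,p,n). -/
def reflLenM (m p n : ℕ) (M : Matrix (Fin n) (Fin n) ℂ) : ℕ :=
  sInf {k | ∃ l : List (Matrix (Fin n) (Fin n) ℂ),
    (∀ s ∈ l, IsReflM m p n s) ∧ l.length = k ∧ l.prod = M}

/-- Transposition-type reflection: swaps coordinates i and j scaling by ζ^a and ζ^{-a}. -/
def IsTranspRefl (m n : ℕ) (M : Matrix (Fin n) (Fin n) ℂ) : Prop :=
  ∃ (i j : Fin n) (c : ℂ), i ≠ j ∧ c ^ m = 1 ∧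
    M = Matrix.of (fun k l =>
      if k = i ∧ l = j then c
      else if k = j ∧ l = i then c⁻¹
      else if k = l ∧ k ≠ i ∧ k ≠ j then 1 else 0)

/-- The codimension order relation on matrices. -/
def codimLeM {n : ℕ} (a c : Matrix (Fin n) (Fin n) ℂ) : Prop :=
  codimM a + codimM (a⁻¹ * c) = codimM c

/-! ### Auxiliary definitions and lemmas -/

/-- The transposition-type reflection matrix. -/
def reflM {n : ℕ} (i j : Fin n) (c : ℂ) : Matrix (Fin n) (Fin n) ℂ :=
  Matrix.of (fun k l =>
      if k = i ∧ l = j then c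
      else if k = j ∧ l = i then c⁻¹
      else if k = l ∧ k ≠ i ∧ k ≠ j then 1 else 0)

lemma reflM_col {n : ℕ} {i j : Fin n} (hij : i ≠ j) (c : ℂ) (k l : Fin n) :
    reflM i j c k l = if k = Equiv.swap i j l then
      (if l = j then c else if l = i then c⁻¹ else 1) else 0 := by
  rcases eq_or_ne l i with rfl | hli <;> rcases eq_or_ne l j with rfl | hlj
  · exact absurd rfl hij
  · simp only [reflM, of_apply, Equiv.swap_apply_left]
    split_ifs <;> subst_vars <;> tauto
  · simp only [reflM, of_apply, Equiv.swap_apply_right]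
    split_ifs <;> subst_vars <;> tauto
  · rw [Equiv.swap_apply_of_ne_of_ne hli hlj]
    simp only [reflM, of_apply]
    split_ifs <;> subst_vars <;> tauto

lemma reflM_row {n : ℕ} {i j : Fin n} (hij : i ≠ j) (c : ℂ) (k l : Fin n) :
    reflM i j c k l = if l = Equiv.swap i j k then
      (if k = i then c else if k = j then c⁻¹ else 1) else 0 := by
  rcases eq_or_ne k i with rfl | hki <;> rcases eq_or_ne k j with rfl | hkj
  · exact absurd rfl hij
  · simp only [reflM, of_apply, Equiv.swap_apply_left]
    split_ifs <;> subst_vars <;> tauto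
  · simp only [reflM, of_apply, Equiv.swap_apply_right]
    split_ifs <;> subst_vars <;> tauto
  · rw [Equiv.swap_apply_of_ne_of_ne hki hkj]
    simp only [reflM, of_apply]
    split_ifs <;> subst_vars <;> tauto

lemma reflM_mul {n : ℕ} {i j : Fin n} (hij : i ≠ j) (c c' : ℂ) :
    reflM i j c * reflM i j c' = Matrix.diagonal
      (fun k => if k = i then c * c'⁻¹ else if k = j then c⁻¹ * c' else 1) := by
  ext k l
  rw [Matrix.mul_apply]
  simp only [reflM_row hij c, reflM_col hij c']
  rw [Finset.sum_eq_single (Equiv.swap i j k)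
      (fun t _ ht => by rw [if_neg ht, zero_mul])
      (fun h => absurd (Finset.mem_univ _) h)]
  rw [if_pos rfl]
  have hswap : (Equiv.swap i j k = Equiv.swap i j l) ↔ k = l := (Equiv.apply_eq_iff_eq _)
  rcases eq_or_ne k l with rfl | hkl
  · rw [if_pos rfl, Matrix.diagonal_apply_eq]
    rcases eq_or_ne k i with rfl | hki <;> rcases eq_or_ne k j with rfl | hkj
    · exact absurd rfl hij
    · simp [Equiv.swap_apply_left, hij, hij.symm, hkj]
    · simp [Equiv.swap_apply_right, hij, hij.symm, hki]
    · simp [Equiv.swap_apply_of_ne_of_ne hki hkj, hki, hkj]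
  · rw [if_neg (fun h => hkl (hswap.mp h)), mul_zero, Matrix.diagonal_apply_ne _ hkl]

lemma mulVecLin_sub_one {n : ℕ} (M : Matrix (Fin n) (Fin n) ℂ) :
    (M - 1).mulVecLin = M.mulVecLin - LinearMap.id := by
  apply LinearMap.ext; intro v
  simp [Matrix.mulVecLin_apply, Matrix.sub_mulVec, Matrix.one_mulVec]

lemma rank_ker {n : ℕ} (M : Matrix (Fin n) (Fin n) ℂ) :
    (M - 1).rank + finrank ℂ (LinearMap.ker (M.mulVecLin - LinearMap.id)) = n := by
  rw [← mulVecLin_sub_one]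
  have h := LinearMap.finrank_range_add_finrank_ker (M - 1).mulVecLin
  rw [Module.finrank_fintype_fun_eq_card, Fintype.card_fin] at h
  exact h

lemma codim_eq_rank {n : ℕ} (M : Matrix (Fin n) (Fin n) ℂ) :
    codimM M = (M - 1).rank := by
  have h := rank_ker M
  unfold codimM
  omega

lemma codim_diagonal {n : ℕ} (w : Fin n → ℂ) :
    codimM (Matrix.diagonal w) = Fintype.card {i // w i ≠ 1} := by
  rw [codim_eq_rank]
  have : Matrix.diagonal w - 1 = Matrix.diagonal (fun i => w i - 1) := by
    rw [← Matrix.diagonal_one, Matrix.diagonal_sub]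
  rw [this, Matrix.rank_diagonal]
  apply Fintype.card_congr
  exact Equiv.subtypeEquivRight (fun i => by simp [sub_ne_zero])

lemma codim_one {n : ℕ} : codimM (1 : Matrix (Fin n) (Fin n) ℂ) = 0 := by
  rw [codim_eq_rank, sub_self, Matrix.rank_zero]

lemma mem_fix {n : ℕ} {M : Matrix (Fin n) (Fin n) ℂ} {v : Fin n → ℂ} :
    v ∈ LinearMap.ker (M.mulVecLin - LinearMap.id) ↔ M.mulVec v = v := by
  rw [LinearMap.mem_ker, LinearMap.sub_apply, LinearMap.id_apply, sub_eq_zero,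
    Matrix.mulVecLin_apply]

lemma finrank_fix_le {n : ℕ} (M : Matrix (Fin n) (Fin n) ℂ) :
    finrank ℂ (LinearMap.ker (M.mulVecLin - LinearMap.id)) ≤ n := by
  have := Submodule.finrank_le (LinearMap.ker (M.mulVecLin - LinearMap.id))
  rwa [Module.finrank_fintype_fun_eq_card, Fintype.card_fin] at this

lemma codim_mul_le {n : ℕ} (A B : Matrix (Fin n) (Fin n) ℂ) :
    codimM (A * B) ≤ codimM A + codimM B := by
  set U := LinearMap.ker (A.mulVecLin - LinearMap.id) with hU
  set V := LinearMap.ker (B.mulVecLin - LinearMap.id) with hV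
  set W := LinearMap.ker ((A * B).mulVecLin - LinearMap.id) with hW
  have hle : U ⊓ V ≤ W := by
    intro v hv
    rw [Submodule.mem_inf] at hv
    rw [hW, mem_fix, ← Matrix.mulVecLin_apply, Matrix.mulVecLin_mul, LinearMap.comp_apply,
      Matrix.mulVecLin_apply, Matrix.mulVecLin_apply, mem_fix.mp hv.2, mem_fix.mp hv.1]
  have h1 := Submodule.finrank_sup_add_finrank_inf_eq U V
  have h2 : finrank ℂ ↥(U ⊔ V) ≤ n := by
    have := Submodule.finrank_le (U ⊔ V)
    rwa [Module.finrank_fintype_fun_eq_card, Fintype.card_fin] at this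
  have h3 : finrank ℂ ↥(U ⊓ V) ≤ finrank ℂ W := Submodule.finrank_mono hle
  have h4 := finrank_fix_le A
  have h5 := finrank_fix_le B
  have h6 := finrank_fix_le (A * B)
  unfold codimM
  rw [← hU, ← hV, ← hW]
  omega

lemma codim_prod_le {n : ℕ} (l : List (Matrix (Fin n) (Fin n) ℂ))
    (h : ∀ s ∈ l, codimM s = 1) : codimM l.prod ≤ l.length := by
  induction l with
  | nil => simp [codim_one]
  | cons a t ih =>
      rw [List.prod_cons]
      calc codimM (a * t.prod) ≤ codimM a + codimM t.prod := codim_mul_le _ _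
        _ ≤ 1 + t.length := by
            have := ih (fun s hs => h s (List.mem_cons_of_mem _ hs))
            have ha := h a List.mem_cons_self
            omega
        _ = (a :: t).length := by simp [add_comm]

lemma mulVec_reflM {n : ℕ} {i j : Fin n} (hij : i ≠ j) (c : ℂ) (v : Fin n → ℂ) :
    (reflM i j c).mulVec v = fun k =>
      (if k = i then c else if k = j then c⁻¹ else 1) * v (Equiv.swap i j k) := by
  funext k
  simp only [Matrix.mulVec, dotProduct, reflM_row hij c, ite_mul, zero_mul]
  rw [Finset.sum_ite_eq' Finset.univ (Equiv.swap i j k)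
    (fun l => if k = i then c * v l else if k = j then c⁻¹ * v l else 1 * v l)]
  simp

lemma codim_reflM {n : ℕ} {i j : Fin n} (hij : i ≠ j) {c : ℂ} (hc : c ≠ 0) :
    codimM (reflM i j c) = 1 := by
  set φ : (Fin n → ℂ) →ₗ[ℂ] ℂ :=
    (LinearMap.proj i : (Fin n → ℂ) →ₗ[ℂ] ℂ) - c • LinearMap.proj j with hφdef
  have hφ : ∀ v, φ v = v i - c * v j := fun v => rfl
  have hker : LinearMap.ker ((reflM i j c).mulVecLin - LinearMap.id) = LinearMap.ker φ := by
    ext v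
    rw [mem_fix, LinearMap.mem_ker, hφ, sub_eq_zero, mulVec_reflM hij]
    constructor
    · intro h
      have := congrFun h i
      simpa [Equiv.swap_apply_left] using this.symm
    · intro h
      funext k
      rcases eq_or_ne k i with rfl | hki
      · simpa [Equiv.swap_apply_left] using h.symm
      rcases eq_or_ne k j with rfl | hkj
      · simp [Equiv.swap_apply_right, hki, h]
        field_simp
      · simp [Equiv.swap_apply_of_ne_of_ne hki hkj, hki, hkj]
  have hrange : LinearMap.range φ = ⊤ := by
    rw [LinearMap.range_eq_top]
    intro a
    refine ⟨Pi.single i a, ?_⟩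
    rw [hφ]
    simp [Pi.single_apply, hij, (Ne.symm hij)]
  have h := LinearMap.finrank_range_add_finrank_ker φ
  rw [hrange, finrank_top, Module.finrank_fintype_fun_eq_card, Fintype.card_fin,
    Module.finrank_self] at h
  have hn : 0 < n := i.pos
  rw [codimM, hker]
  omega

lemma det_of_refl {m n : ℕ} (hm : 3 ≤ m) {M : Matrix (Fin n) (Fin n) ℂ}
    (hM : IsReflM m m n M) : M.det = -1 := by
  obtain ⟨⟨σ, d, hd, hprodpow, hMe⟩, hne, hcodim⟩ := hM
  have hprod : ∏ j, d j = 1 := by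
    rwa [Nat.div_self (show 0 < m by omega), pow_one] at hprodpow
  have hMfact : M = (Equiv.Perm.permMatrix ℂ σ⁻¹) * Matrix.diagonal d := by
    ext k l
    rw [Matrix.mul_diagonal, hMe, Equiv.Perm.permMatrix, PEquiv.toMatrix_apply,
      Equiv.toPEquiv_apply]
    rcases eq_or_ne k (σ l) with rfl | hkl
    · simp
    · rw [if_neg hkl, if_neg ?_, zero_mul]
      simp only [Option.mem_some_iff]
      intro h
      exact hkl (by rw [← h]; simp)
  have hdet : M.det = ((Equiv.Perm.sign σ : ℤ) : ℂ) := by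
    rw [hMfact, Matrix.det_mul, Matrix.det_permutation, Matrix.det_diagonal, hprod,
      mul_one, Equiv.Perm.sign_inv]
  rcases Int.units_eq_one_or (Equiv.Perm.sign σ) with h1 | h1
  · exfalso
    -- sign σ = 1 : derive a contradiction
    rcases eq_or_ne σ 1 with rfl | hσne
    · -- M is diagonal
      have hMd : M = Matrix.diagonal d := by
        ext k l
        rw [hMe, Matrix.diagonal_apply]
        rcases eq_or_ne k l with rfl | h
        · simp
        · simp [h]
      rw [hMd, codim_diagonal] at hcodim
      obtain ⟨⟨i0, hi0⟩, huniq⟩ := Fintype.card_eq_one_iff.mp hcodim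
      have hall : ∀ b, b ≠ i0 → d b = 1 := by
        intro b hb
        by_contra hdb
        exact hb (congrArg Subtype.val (huniq ⟨b, hdb⟩))
      have hp2 : ∏ jj, d jj = d i0 :=
        Finset.prod_eq_single i0 (fun b _ hb => hall b hb) (by simp)
      exact hi0 (by rw [← hp2, hprod])
    · -- σ ≠ 1
      obtain ⟨j0, hj0⟩ : ∃ x, σ x ≠ x := by
        by_contra hc
        push_neg at hc
        exact hσne (Equiv.ext hc)
      have hij0 : σ j0 ≠ j0 := hj0
      by_cases hex : ∃ x, x ≠ j0 ∧ x ≠ σ j0 ∧ σ x ≠ x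
      · obtain ⟨j1, hj1j0, hj1i0, hj1mv⟩ := hex
        -- rank ≥ 2 contradiction
        have hrank : (M - 1).rank = 1 := by rw [← codim_eq_rank]; exact hcodim
        set F := (M - 1).mulVecLin with hF
        set u := F (Pi.single j0 1) with hu
        set v := F (Pi.single j1 1) with hv
        have hcol : ∀ (j2 k : Fin n), F (Pi.single j2 1) k
            = (if k = σ j2 then d j2 else 0) - (if k = j2 then 1 else 0) := by
          intro j2 k
          rw [hF, Matrix.mulVecLin_apply, Matrix.mulVec_single]
          simp [Matrix.sub_apply, hMe, Matrix.one_apply]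
        have hli : LinearIndependent ℂ ![u, v] := by
          rw [LinearIndependent.pair_iff]
          intro a b hab
          have h_at : ∀ k, a * u k + b * v k = 0 := by
            intro k
            have := congrFun hab k
            simpa using this
          have hb : b = 0 := by
            have h1 := h_at j1
            rw [hu, hv, hcol j0 j1, hcol j1 j1, if_neg hj1i0, if_neg hj1j0,
              if_neg (Ne.symm hj1mv), if_pos rfl] at h1
            simpa using h1
          have ha : a = 0 := by
            have h1 := h_at j0
            rw [hu, hv, hcol j0 j0, hcol j1 j0, hb, if_neg (Ne.symm hij0), if_pos rfl] at h1
            simpa using h1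
          exact ⟨ha, hb⟩
        have h2le : 2 ≤ (M - 1).rank := by
          have hsub : Submodule.span ℂ (Set.range ![u, v]) ≤ LinearMap.range F := by
            rw [Submodule.span_le]
            rintro x ⟨t, rfl⟩
            fin_cases t
            · exact ⟨Pi.single j0 1, rfl⟩
            · exact ⟨Pi.single j1 1, rfl⟩
          have hmono := Submodule.finrank_mono hsub
          rw [finrank_span_eq_card hli] at hmono
          simpa [Matrix.rank] using hmono
        omega
      · -- σ is the transposition swap j0 (σ j0), contradicting sign σ = 1
        push_neg at hex
        have hσi0ne : σ (σ j0) ≠ σ j0 := fun h => hij0 (σ.injective h)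
        have hσi0 : σ (σ j0) = j0 := by
          by_contra hne2
          exact hσi0ne (σ.injective (hex (σ (σ j0)) hne2 hσi0ne))
        have hσswap : σ = Equiv.swap j0 (σ j0) := by
          apply Equiv.ext; intro x
          rcases eq_or_ne x j0 with rfl | hx1
          · rw [Equiv.swap_apply_left]
          rcases eq_or_ne x (σ j0) with rfl | hx2
          · rw [Equiv.swap_apply_right, hσi0]
          · rw [Equiv.swap_apply_of_ne_of_ne hx1 hx2]
            exact hex x hx1 hx2
        rw [hσswap, Equiv.Perm.sign_swap (Ne.symm hij0)] at h1
        exact absurd h1 (by norm_num)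
  · rw [h1] at hdet
    simpa using hdet

lemma isRefl_reflM {m n : ℕ} (hm : 3 ≤ m) {i j : Fin n} (hij : i ≠ j) {c : ℂ}
    (hc : c ^ m = 1) : IsReflM m m n (reflM i j c) := by
  have hc0 : c ≠ 0 := by
    intro h
    rw [h, zero_pow (show m ≠ 0 by omega)] at hc
    exact zero_ne_one hc
  refine ⟨⟨Equiv.swap i j, fun l => if l = j then c else if l = i then c⁻¹ else 1,
      ?_, ?_, fun k l => reflM_col hij c k l⟩, ?_, codim_reflM hij hc0⟩
  · intro l
    dsimp only
    split_ifs
    · exact hc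
    · rw [inv_pow, hc, inv_one]
    · exact one_pow m
  · have hp : (∏ l, (if l = j then c else if l = i then c⁻¹ else 1)) = 1 := by
      rw [← Finset.prod_subset (Finset.subset_univ ({i, j} : Finset (Fin n)))
        (fun x _ hx => by
          simp only [Finset.mem_insert, Finset.mem_singleton, not_or] at hx
          simp [hx.1, hx.2])]
      rw [Finset.prod_pair hij]
      simp [hij, Ne.symm hij, inv_mul_cancel₀ hc0]
    rw [hp, one_pow]
  · intro h
    have h0 := congrFun (congrFun h i) i
    simp [reflM, hij, Matrix.one_apply] at h0

lemma prod_ite_three {n : ℕ} {a0 a1 a2 : Fin n} (h01 : a0 ≠ a1) (h02 : a0 ≠ a2)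
    (h12 : a1 ≠ a2) (z1 z2 z3 : ℂ) :
    (∏ i, (if i = a0 then z1 else if i = a1 then z2 else if i = a2 then z3 else 1))
      = z1 * z2 * z3 := by
  rw [← Finset.prod_subset (Finset.subset_univ ({a0, a1, a2} : Finset (Fin n)))
    (fun x _ hx => by
      simp only [Finset.mem_insert, Finset.mem_singleton, not_or] at hx
      simp [hx.1, hx.2.1, hx.2.2])]
  rw [show ({a0, a1, a2} : Finset (Fin n)) = insert a0 {a1, a2} from rfl,
    Finset.prod_insert (by simp [h01, h02]), Finset.prod_pair h12]
  simp [h01, h02, h12, Ne.symm h01, Ne.symm h02, Ne.symm h12]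
  ring

lemma card_ite_three {n : ℕ} {a0 a1 a2 : Fin n} (h01 : a0 ≠ a1) (h02 : a0 ≠ a2)
    (h12 : a1 ≠ a2) {z1 z2 z3 : ℂ} (hz1 : z1 ≠ 1) (hz2 : z2 ≠ 1) (hz3 : z3 ≠ 1) :
    Fintype.card {i // (if i = a0 then z1 else if i = a1 then z2 else
      if i = a2 then z3 else 1) ≠ 1} = 3 := by
  have hiff : ∀ i : Fin n, ((if i = a0 then z1 else if i = a1 then z2 else
      if i = a2 then z3 else 1) ≠ 1) ↔ i ∈ ({a0, a1, a2} : Finset (Fin n)) := by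
    intro i
    rcases eq_or_ne i a0 with rfl | h0
    · simp [hz1]
    rcases eq_or_ne i a1 with rfl | h1
    · simp [h0, hz2]
    rcases eq_or_ne i a2 with rfl | h2
    · simp [h0, h1, hz3]
    · simp [h0, h1, h2]
  rw [Fintype.card_congr (Equiv.subtypeEquivRight hiff), Fintype.card_coe]
  rw [show ({a0, a1, a2} : Finset (Fin n)) = insert a0 {a1, a2} from rfl,
    Finset.card_insert_of_notMem (by simp [h01, h02]), Finset.card_pair h12]

theorem gmmn_length_ne_codim (m n : ℕ) (hm : 3 ≤ m) (hn : 3 ≤ n)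
    (g : Matrix (Fin n) (Fin n) ℂ)
    (hg : g = Matrix.diagonal (fun i : Fin n =>
      if i = ⟨0, by omega⟩ then zeta m
      else if i = ⟨1, by omega⟩ then zeta m ^ (m - 2)
      else if i = ⟨2, by omega⟩ then zeta m else 1)) :
    codimM g = 3 ∧ reflLenM m m n g = 4 := by
  have hmne : (m : ℂ) ≠ 0 := by exact_mod_cast (show (m : ℕ) ≠ 0 by omega)
  have hprim : IsPrimitiveRoot (zeta m) m := Complex.isPrimitiveRoot_exp m (by omega)
  have hzm : zeta m ^ m = 1 := hprim.pow_eq_one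
  have hz1 : zeta m ≠ 1 := by
    have := hprim.pow_ne_one_of_pos_of_lt (show 1 ≠ 0 by omega) (show 1 < m by omega)
    simpa using this
  have hzm2 : zeta m ^ (m - 2) ≠ 1 :=
    hprim.pow_ne_one_of_pos_of_lt (by omega) (by omega)
  have hz0 : zeta m ≠ 0 := fun h => by
    rw [h, zero_pow (show m ≠ 0 by omega)] at hzm; exact zero_ne_one hzm
  set a0 : Fin n := ⟨0, by omega⟩ with ha0
  set a1 : Fin n := ⟨1, by omega⟩ with ha1
  set a2 : Fin n := ⟨2, by omega⟩ with ha2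
  have h01 : a0 ≠ a1 := by simp [ha0, ha1, Fin.ext_iff]
  have h02 : a0 ≠ a2 := by simp [ha0, ha2, Fin.ext_iff]
  have h12 : a1 ≠ a2 := by simp [ha1, ha2, Fin.ext_iff]
  have hcodimg : codimM g = 3 := by
    rw [hg, codim_diagonal]
    exact card_ite_three h01 h02 h12 hz1 hzm2 hz1
  refine ⟨hcodimg, ?_⟩
  -- the multiplication identity ζ⁻¹ * ζ⁻¹ = ζ^(m-2)
  have hzz : (zeta m)⁻¹ * (zeta m)⁻¹ = zeta m ^ (m - 2) := by
    have h2 : zeta m ^ (m - 2) * (zeta m * zeta m) = 1 := by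
      calc zeta m ^ (m - 2) * (zeta m * zeta m) = zeta m ^ (m - 2) * zeta m ^ 2 := by
            rw [sq]
        _ = zeta m ^ (m - 2 + 2) := (pow_add _ _ _).symm
        _ = zeta m ^ m := by congr 1; omega
        _ = 1 := hzm
    field_simp
    linear_combination -h2
  -- the list of four reflections
  set L : List (Matrix (Fin n) (Fin n) ℂ) :=
    [reflM a0 a1 (zeta m), reflM a0 a1 1, reflM a1 a2 1, reflM a1 a2 (zeta m)] with hL
  have hLrefl : ∀ s ∈ L, IsReflM m m n s := by
    intro s hs
    simp only [hL, List.mem_cons, List.not_mem_nil, or_false] at hs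
    rcases hs with rfl | rfl | rfl | rfl
    · exact isRefl_reflM hm h01 hzm
    · exact isRefl_reflM hm h01 (one_pow m)
    · exact isRefl_reflM hm h12 (one_pow m)
    · exact isRefl_reflM hm h12 hzm
  have hLprod : L.prod = g := by
    have hstep : L.prod = (reflM a0 a1 (zeta m) * reflM a0 a1 1) *
        (reflM a1 a2 1 * reflM a1 a2 (zeta m)) := by
      simp [hL, List.prod_cons, mul_assoc]
    rw [hstep, reflM_mul h01, reflM_mul h12, Matrix.diagonal_mul_diagonal, hg]
    refine congrArg Matrix.diagonal (funext fun k => ?_)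
    rcases eq_or_ne k a0 with rfl | hk0
    · simp [h01, h02]
    rcases eq_or_ne k a1 with rfl | hk1
    · simp only [if_neg hk0, if_pos rfl, if_neg (Ne.symm h01), if_neg h12, mul_one, one_mul]
      exact hzz
    rcases eq_or_ne k a2 with rfl | hk2
    · simp [hk0, hk1, Ne.symm h02, Ne.symm h12]
    · simp [hk0, hk1, hk2]
  have h4mem : 4 ∈ {k | ∃ l : List (Matrix (Fin n) (Fin n) ℂ),
      (∀ s ∈ l, IsReflM m m n s) ∧ l.length = k ∧ l.prod = g} :=
    ⟨L, hLrefl, by simp [hL], hLprod⟩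
  have hdetg : g.det = 1 := by
    rw [hg, Matrix.det_diagonal, prod_ite_three h01 h02 h12]
    calc zeta m * zeta m ^ (m - 2) * zeta m = zeta m ^ (m - 2) * (zeta m * zeta m) := by ring
      _ = zeta m ^ (m - 2) * zeta m ^ 2 := by rw [sq]
      _ = zeta m ^ (m - 2 + 2) := (pow_add _ _ _).symm
      _ = zeta m ^ m := by congr 1; omega
      _ = 1 := hzm
  rw [reflLenM]
  apply le_antisymm
  · exact Nat.sInf_le h4mem
  · apply le_csInf ⟨4, h4mem⟩
    rintro k ⟨l, hlrefl, hlen, hlprod⟩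
    -- k ≥ 3 from codimension
    have hk3 : 3 ≤ k := by
      have := codim_prod_le l (fun s hs => (hlrefl s hs).2.2)
      rw [hlprod, hlen, hcodimg] at this
      omega
    -- k is even from the determinant
    have hdetl : l.prod.det = (-1 : ℂ) ^ k := by
      have h1 : l.prod.det = (l.map Matrix.det).prod := by
        rw [show (Matrix.det (l.prod)) = Matrix.detMonoidHom l.prod from rfl,
          MonoidHom.map_list_prod]
        congr 1
      rw [h1, List.prod_eq_pow_card (l.map Matrix.det) (-1) (fun x hx => by
        obtain ⟨s, hs, rfl⟩ := List.mem_map.mp hx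
        exact det_of_refl hm (hlrefl s hs)), List.length_map, hlen]
    have hpow : (-1 : ℂ) ^ k = 1 := by rw [← hdetl, hlprod, hdetg]
    have heven : Even k := by
      by_contra hodd
      rw [Nat.not_even_iff_odd] at hodd
      rw [hodd.neg_one_pow] at hpow
      norm_num at hpow
    obtain ⟨t, rfl⟩ := heven
    omega
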